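/- Fix N ≥ 1, d ≥ 1, m > 0, α = 3/2, and a potential W : ℤ^{Nd} → ℝ; let H be the lattice Schrödinger operator (HΨ)(x) = Σ_{y : ‖y−x‖₁=1} Ψ(y) + W(x)Ψ(x) on ℤ^{Nd}. Let Ψ : ℤ^{Nd} → ℂ be polynomially bounded (|Ψ(x)| ≤ C_Ψ (1+‖x‖)^A for some A < ∞), not identically zero, and satisfy HΨ = EΨ pointwise for some E ∈ ℝ. Let u ∈ ℤ^{Nd} be any point with Ψ(u) ≠ 0. Then the set of integers L with ‖u‖ ≤ L^{1/α} such that the cube C_L(0) is (E,m)-non-singular is finite; equivalently, there exists L₁ such that C_L(0) is (E,m)-singular for every L ≥ L₁. -/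

import Mathlib

open scoped BigOperators ENNReal
open MeasureTheory

namespace MPLoc

/-- Configurations of `N` particles in `ℤ^d`. -/
abbrev Conf (N d : ℕ) := Fin N × Fin d → ℤ

/-- Max-norm on `ℤ^ι`. -/
def supNorm {ι : Type*} [Fintype ι] (x : ι → ℤ) : ℕ :=
  Finset.univ.sup fun i => (x i).natAbs

/-- ℓ¹-norm on `ℤ^ι`. -/
def l1Norm {ι : Type*} [Fintype ι] (x : ι → ℤ) : ℕ :=
  ∑ i, (x i).natAbs

/-- The cube `C_L(u) = {x : ‖x - u‖_∞ ≤ L}`. -/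
noncomputable def cube {ι : Type*} [Fintype ι] [DecidableEq ι] (u : ι → ℤ) (L : ℕ) :
    Finset (ι → ℤ) :=
  Finset.Icc (fun i => u i - L) (fun i => u i + L)

/-- The finite-volume Hamiltonian with Dirichlet boundary conditions on `Λ`,
as a matrix: nearest-neighbour hopping plus multiplication by `W`. -/
noncomputable def hamMatrix {ι : Type*} [Fintype ι] [DecidableEq ι]
    (W : (ι → ℤ) → ℝ) (Λ : Finset (ι → ℤ)) : Matrix Λ Λ ℂ :=
  fun x y => (if l1Norm (x.1 - y.1) = 1 then 1 else 0) +
    (if x = y then (W x.1 : ℂ) else 0)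

/-- `z` is an eigenvalue of the matrix `A`. -/
def IsEV {n : Type*} [Fintype n] [DecidableEq n] (A : Matrix n n ℂ) (z : ℂ) : Prop :=
  ∃ v : n → ℂ, v ≠ 0 ∧ A.mulVec v = z • v

/-- Green function `G_Λ(x, y; ζ)` of the finite-volume Hamiltonian. -/
noncomputable def green {ι : Type*} [Fintype ι] [DecidableEq ι]
    (W : (ι → ℤ) → ℝ) (Λ : Finset (ι → ℤ)) (ζ : ℂ) (x y : ι → ℤ) : ℂ :=
  if hx : x ∈ Λ then
    if hy : y ∈ Λ then ((hamMatrix W Λ - ζ • (1 : Matrix Λ Λ ℂ))⁻¹) ⟨x, hx⟩ ⟨y, hy⟩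
    else 0
  else 0

/-- `γ(m, L, n) = m L (1 + L^{-1/4})^{N - n + 1}`. -/
noncomputable def gammaExp (m : ℝ) (L : ℕ) (N n : ℕ) : ℝ :=
  m * L * (1 + (L : ℝ) ^ (-(1 : ℝ) / 4)) ^ (N - n + 1)

/-- The cube `C_L(u) ⊂ ℤ^{Nd}` is `(E,m)`-non-singular. -/
noncomputable def NonSingular {ι : Type*} [Fintype ι] [DecidableEq ι] (N : ℕ)
    (W : (ι → ℤ) → ℝ) (E m : ℝ) (u : ι → ℤ) (L : ℕ) : Prop :=
  ¬ IsEV (hamMatrix W (cube u L)) (E : ℂ) ∧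
  ∀ x : ι → ℤ, ((supNorm (x - u) : ℝ) ≤ (L : ℝ) ^ ((2 : ℝ) / 3)) →
    ∀ y : ι → ℤ, supNorm (y - u) = L →
      ‖green W (cube u L) (E : ℂ) x y‖ ≤ Real.exp (-(gammaExp m L N N))

/-- Symmetrized distance `d_S(x,y) = min_τ ‖τ(x) - y‖` on `(ℤ^d)^N`. -/
noncomputable def symmDist (N d : ℕ) (x y : Conf N d) : ℤ :=
  Finset.univ.inf' ⟨1, Finset.mem_univ 1⟩ fun τ : Equiv.Perm (Fin N) =>
    supNorm (fun p : Fin N × Fin d => x (τ p.1, p.2) - y p)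

/-- Potential energy of the `N`-particle Hamiltonian:
`W(x) = g ∑_j V(x_j; ω) + U(x)`. -/
def potW {N d : ℕ} {Ω : Type*} (g : ℝ) (V : (Fin d → ℤ) → Ω → ℝ)
    (U : Conf N d → ℝ) (ω : Ω) (x : Conf N d) : ℝ :=
  g * ∑ j : Fin N, V (fun i => x (j, i)) ω + U x

/-- Action of the full lattice Hamiltonian `H = Δ + W` on a function. -/
noncomputable def hamApply {ι : Type*} [Fintype ι] [DecidableEq ι]
    (W : (ι → ℤ) → ℝ) (Ψ : (ι → ℤ) → ℂ) (x : ι → ℤ) : ℂ :=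
  (∑ y ∈ cube x 1, if l1Norm (y - x) = 1 then Ψ y else 0) + (W x : ℂ) * Ψ x

/-- The scales `L_0, L_{k+1} = ⌊L_k^{3/2}⌋`. -/
noncomputable def scale (L0 : ℕ) : ℕ → ℕ
  | 0 => L0
  | k + 1 => Nat.floor ((scale L0 k : ℝ) ^ ((3 : ℝ) / 2))

/-- Sample mean `ξ_Q` of the random field `V` over `Q`. -/
noncomputable def sampleMean {d : ℕ} {Ω : Type*} (V : (Fin d → ℤ) → Ω → ℝ)
    (Q : Finset (Fin d → ℤ)) (ω : Ω) : ℝ :=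
  (∑ x ∈ Q, V x ω) / Q.card

/-- The σ-algebra `F_{V,Q}` generated by the fluctuations `η_x = V(x) - ξ_Q`, `x ∈ Q`,
together with `V(y)`, `y ∉ Q`. -/
noncomputable def fieldSigma {d : ℕ} {Ω : Type*} [MeasurableSpace Ω]
    (V : (Fin d → ℤ) → Ω → ℝ) (Q : Finset (Fin d → ℤ)) : MeasurableSpace Ω :=
  (⨆ x ∈ Q, MeasurableSpace.comap (fun ω => V x ω - sampleMean V Q ω) inferInstance) ⊔
  (⨆ (y : Fin d → ℤ) (_ : y ∉ Q), MeasurableSpace.comap (V y) inferInstance)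

/-- Condition (CMν): the conditional distribution function of the sample mean `ξ_Q`
given `F_{V,Q}` has continuity modulus `ν_R` for every rectangle `Q` of diameter `≤ R`. -/
def CondMeasCM {d : ℕ} {Ω : Type*} [MeasurableSpace Ω] (μ : Measure Ω)
    (V : (Fin d → ℤ) → Ω → ℝ) (ν : ℕ → ℝ → ℝ) : Prop :=
  (∀ R : ℕ, ∀ t : ℝ, 0 ≤ ν R t) ∧
  (∀ R : ℕ, Filter.Tendsto (ν R) (nhdsWithin 0 (Set.Ioi 0)) (nhds 0)) ∧
  ∀ (R : ℕ) (Q : Finset (Fin d → ℤ)), Q.Nonempty →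
    (∃ a b : Fin d → ℤ, Q = Finset.Icc a b) →
    (∀ x ∈ Q, ∀ y ∈ Q, supNorm (x - y) ≤ R) →
    ∀ t s : ℝ, ∀ᵐ ω ∂μ,
      |MeasureTheory.condExp (fieldSigma V Q) μ
          (Set.indicator {ω' | sampleMean V Q ω' ≤ t} (fun _ => (1 : ℝ))) ω -
       MeasureTheory.condExp (fieldSigma V Q) μ
          (Set.indicator {ω' | sampleMean V Q ω' ≤ s} (fun _ => (1 : ℝ))) ω|
        ≤ ν R |t - s|




-- ===== auxiliary lemmas =====

lemma l1Norm_sub_comm {ι : Type*} [Fintype ι] (x y : ι → ℤ) :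
    l1Norm (x - y) = l1Norm (y - x) := by
  unfold l1Norm
  refine Finset.sum_congr rfl fun i _ => ?_
  simp only [Pi.sub_apply]
  omega

lemma supNorm_le_iff {ι : Type*} [Fintype ι] (x : ι → ℤ) (n : ℕ) :
    supNorm x ≤ n ↔ ∀ i, (x i).natAbs ≤ n := by
  simp [supNorm, Finset.sup_le_iff]

lemma mem_cube_iff {ι : Type*} [Fintype ι] [DecidableEq ι] (u x : ι → ℤ) (L : ℕ) :
    x ∈ cube u L ↔ supNorm (x - u) ≤ L := by
  rw [cube, Finset.mem_Icc, supNorm_le_iff]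
  constructor
  · rintro ⟨h1, h2⟩ i
    have a1 := h1 i; have a2 := h2 i
    simp only [Pi.sub_apply] at *
    omega
  · intro h
    constructor <;> intro i <;> have := h i <;> simp only [Pi.sub_apply] at * <;> omega

lemma supNorm_le_l1Norm {ι : Type*} [Fintype ι] (x : ι → ℤ) :
    supNorm x ≤ l1Norm x := by
  refine Finset.sup_le fun i _ => ?_
  exact Finset.single_le_sum (f := fun j => (x j).natAbs) (fun j _ => Nat.zero_le _)
    (Finset.mem_univ i)

lemma natAbs_le_supNorm {ι : Type*} [Fintype ι] (x : ι → ℤ) (i : ι) :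
    (x i).natAbs ≤ supNorm x := by
  exact Finset.le_sup (f := fun j => (x j).natAbs) (Finset.mem_univ i)

lemma card_cube {ι : Type*} [Fintype ι] [DecidableEq ι] (u : ι → ℤ) (L : ℕ) :
    (cube u L).card = (2 * L + 1) ^ (Fintype.card ι) := by
  rw [cube, Pi.card_Icc]
  have : ∀ i : ι, (Finset.Icc (u i - L) (u i + L)).card = 2 * L + 1 := by
    intro i; rw [Int.card_Icc]; omega
  simp only [this, Finset.prod_const, Finset.card_univ]



lemma key_bound (N d : ℕ) (m : ℝ) (hm : 0 < m) (W : Conf N d → ℝ) (Ψ : Conf N d → ℂ)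
    (E A C₀ : ℝ)
    (hpoly : ∀ x : Conf N d, ‖Ψ x‖ ≤ C₀ * (1 + (supNorm x : ℝ)) ^ A)
    (heig : ∀ x : Conf N d, hamApply W Ψ x = (E : ℂ) * Ψ x)
    (u : Conf N d) (L : ℕ) (hL : 1 ≤ L)
    (hu2 : (supNorm u : ℝ) ≤ (L : ℝ) ^ ((2 : ℝ) / 3))
    (hNS : NonSingular N W E m (0 : Conf N d) L) :
    ‖Ψ u‖ ≤ ((2 * L + 1 : ℕ) : ℝ) ^ (N * d) * (3 : ℝ) ^ (N * d) *
      (max C₀ 1) * ((L : ℝ) + 2) ^ |A| * Real.exp (-(m * L)) := by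
  classical
  set Λ : Finset (Conf N d) := cube (0 : Conf N d) L with hΛ
  have hcard : Fintype.card (Fin N × Fin d) = N * d := by simp
  -- u ∈ Λ
  have huL : supNorm u ≤ L := by
    have h23 : ((L : ℝ)) ^ ((2:ℝ)/3) ≤ ((L:ℝ)) ^ (1:ℝ) := by
      apply Real.rpow_le_rpow_of_exponent_le (by exact_mod_cast hL) (by norm_num)
    rw [Real.rpow_one] at h23
    exact_mod_cast hu2.trans h23
  have huΛ : u ∈ Λ := by
    rw [hΛ, mem_cube_iff]; simpa using huL
  set M : Matrix Λ Λ ℂ := hamMatrix W Λ - (E : ℂ) • (1 : Matrix Λ Λ ℂ) with hM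
  -- invertibility
  have hdet : M.det ≠ 0 := by
    intro h0
    obtain ⟨v, hv, hMv⟩ := (Matrix.exists_mulVec_eq_zero_iff).mpr h0
    refine hNS.1 ⟨v, hv, ?_⟩
    rw [hM, Matrix.sub_mulVec, Matrix.smul_mulVec, Matrix.one_mulVec,
      sub_eq_zero] at hMv
    exact hMv
  have hinv : M⁻¹ * M = 1 := Matrix.nonsing_inv_mul M (isUnit_iff_ne_zero.mpr hdet)
  set φ : Λ → ℂ := fun x => Ψ x.1 with hφ
  -- representation of Ψ u
  have hrep : Ψ u = ∑ y : Λ, M⁻¹ ⟨u, huΛ⟩ y * (M.mulVec φ) y := by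
    have h1 : M⁻¹.mulVec (M.mulVec φ) = φ := by
      rw [Matrix.mulVec_mulVec, hinv, Matrix.one_mulVec]
    have h2 := congrFun h1 ⟨u, huΛ⟩
    simpa [Matrix.mulVec, dotProduct, hφ] using h2.symm
  -- boundary expression
  have hb : ∀ y : Λ, (M.mulVec φ) y =
      -∑ z ∈ ((cube y.1 1).filter (fun z => l1Norm (z - y.1) = 1)) \
        (Λ.filter (fun z => l1Norm (z - y.1) = 1)), Ψ z := by
    intro y
    have hsub : Λ.filter (fun z => l1Norm (z - y.1) = 1) ⊆
        (cube y.1 1).filter (fun z => l1Norm (z - y.1) = 1) := by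
      intro z hz
      rw [Finset.mem_filter] at hz ⊢
      refine ⟨?_, hz.2⟩
      rw [mem_cube_iff]
      exact (supNorm_le_l1Norm _).trans (le_of_eq hz.2)
    have hdiff := Finset.sum_sdiff (f := Ψ) hsub
    have heq : (M.mulVec φ) y =
        (∑ z ∈ Λ.filter (fun z => l1Norm (z - y.1) = 1), Ψ z) -
        ∑ z ∈ (cube y.1 1).filter (fun z => l1Norm (z - y.1) = 1), Ψ z := by
      have hexp : (M.mulVec φ) y =
          (∑ z ∈ Λ, if l1Norm (z - y.1) = 1 then Ψ z else 0) +
            ((W y.1 : ℂ) * Ψ y.1 - (E : ℂ) * Ψ y.1) := by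
        have hterm : ∀ z : Λ, M y z * φ z =
            (if l1Norm (z.1 - y.1) = 1 then Ψ z.1 else 0) +
              ((if y = z then (W y.1 : ℂ) * Ψ z.1 else 0) -
               (if y = z then (E : ℂ) * Ψ z.1 else 0)) := by
          intro z
          simp only [hM, Matrix.sub_apply, Matrix.smul_apply, Matrix.one_apply,
            hamMatrix, hφ, smul_eq_mul, l1Norm_sub_comm z.1 y.1]
          split_ifs <;> ring
        calc (M.mulVec φ) y = ∑ z : Λ, M y z * φ z := by
              simp [Matrix.mulVec, dotProduct]
          _ = ∑ z : Λ, ((if l1Norm (z.1 - y.1) = 1 then Ψ z.1 else 0) +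
              ((if y = z then (W y.1 : ℂ) * Ψ z.1 else 0) -
               (if y = z then (E : ℂ) * Ψ z.1 else 0))) :=
              Finset.sum_congr rfl fun z _ => hterm z
          _ = (∑ z : Λ, if l1Norm (z.1 - y.1) = 1 then Ψ z.1 else 0) +
              ((W y.1 : ℂ) * Ψ y.1 - (E : ℂ) * Ψ y.1) := by
              rw [Finset.sum_add_distrib, Finset.sum_sub_distrib]
              simp [Finset.sum_ite_eq]
          _ = _ := by
              rw [Finset.sum_coe_sort Λ (fun z => if l1Norm (z - y.1) = 1 then Ψ z else 0)]
      have heig' := heig y.1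
      simp only [hamApply] at heig'
      rw [hexp, Finset.sum_filter, Finset.sum_filter]
      linear_combination heig'
    rw [heq, ← hdiff]
    ring
  -- pointwise eigenfunction bound
  have hCmax : (0:ℝ) ≤ max C₀ 1 := le_trans zero_le_one (le_max_right _ _)
  have hL1 : (1:ℝ) ≤ (L:ℝ) := by exact_mod_cast hL
  have hpsiB : ∀ z : Conf N d, supNorm z ≤ L + 1 →
      ‖Ψ z‖ ≤ max C₀ 1 * ((L:ℝ) + 2) ^ |A| := by
    intro z hz
    have h1 : (1:ℝ) ≤ 1 + (supNorm z : ℝ) := by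
      have := (Nat.cast_nonneg (supNorm z) : (0:ℝ) ≤ supNorm z); linarith
    have h2 : (1:ℝ) + (supNorm z : ℝ) ≤ (L:ℝ) + 2 := by
      have : (supNorm z : ℝ) ≤ (L:ℝ) + 1 := by exact_mod_cast hz
      linarith
    have hL2 : (1:ℝ) ≤ (L:ℝ) + 2 := by linarith
    have hcore : (1 + (supNorm z : ℝ)) ^ A ≤ ((L:ℝ) + 2) ^ |A| := by
      rcases le_or_gt 0 A with hA | hA
      · calc (1 + (supNorm z:ℝ)) ^ A ≤ ((L:ℝ)+2) ^ A :=
            Real.rpow_le_rpow (by linarith) h2 hA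
          _ ≤ ((L:ℝ)+2) ^ |A| :=
            Real.rpow_le_rpow_of_exponent_le hL2 (le_abs_self A)
      · calc (1 + (supNorm z:ℝ)) ^ A ≤ (1 + (supNorm z:ℝ)) ^ (0:ℝ) :=
            Real.rpow_le_rpow_of_exponent_le h1 hA.le
          _ = 1 := Real.rpow_zero _
          _ ≤ ((L:ℝ)+2) ^ |A| := by
            rw [show (1:ℝ) = ((L:ℝ)+2) ^ (0:ℝ) from (Real.rpow_zero _).symm]
            exact Real.rpow_le_rpow_of_exponent_le hL2 (abs_nonneg A)
    calc ‖Ψ z‖ ≤ C₀ * (1 + (supNorm z:ℝ))^A := hpoly z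
      _ ≤ max C₀ 1 * ((L:ℝ)+2)^|A| :=
        mul_le_mul (le_max_left _ _) hcore (Real.rpow_nonneg (by linarith) _) hCmax
  set K : ℝ := (3:ℝ)^(N*d) * (max C₀ 1 * ((L:ℝ)+2)^|A|) with hK
  have hKnn : 0 ≤ K := by
    rw [hK]
    exact mul_nonneg (pow_nonneg (by norm_num) _)
      (mul_nonneg hCmax (Real.rpow_nonneg (by linarith) _))
  -- bound on the boundary term
  have hbabs : ∀ y : Λ, ‖(M.mulVec φ) y‖ ≤ K := by
    intro y
    rw [hb y, norm_neg]
    have hmem : ∀ z ∈ ((cube y.1 1).filter (fun z => l1Norm (z - y.1) = 1)) \ (Λ.filter (fun z => l1Norm (z - y.1) = 1)), supNorm z ≤ L + 1 := by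
      intro z hz
      have hz1 : z ∈ cube y.1 1 :=
        (Finset.mem_filter.mp (Finset.mem_sdiff.mp hz).1).1
      have hz2 := (supNorm_le_iff _ _).mp ((mem_cube_iff _ _ _).mp hz1)
      have hy2 := (supNorm_le_iff _ _).mp ((mem_cube_iff _ _ _).mp y.2)
      rw [supNorm_le_iff]
      intro i
      have a1 := hz2 i; have a2 := hy2 i
      simp only [Pi.sub_apply, Pi.zero_apply] at a1 a2
      omega
    calc ‖∑ z ∈ _, Ψ z‖ ≤ ∑ z ∈ ((cube y.1 1).filter
          (fun z => l1Norm (z - y.1) = 1)) \ (Λ.filter (fun z => l1Norm (z - y.1) = 1)),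
          ‖Ψ z‖ := norm_sum_le _ _
      _ ≤ ∑ _z ∈ ((cube y.1 1).filter (fun z => l1Norm (z - y.1) = 1)) \ (Λ.filter (fun z => l1Norm (z - y.1) = 1)),
            (max C₀ 1 * ((L:ℝ)+2)^|A|) :=
          Finset.sum_le_sum fun z hz => hpsiB z (hmem z hz)
      _ ≤ K := by
          rw [Finset.sum_const, nsmul_eq_mul, hK]
          have hcle : (((cube y.1 1).filter (fun z => l1Norm (z - y.1) = 1)) \ (Λ.filter (fun z => l1Norm (z - y.1) = 1))).card ≤ 3^(N*d) := by
            calc _ ≤ ((cube y.1 1).filter (fun z => l1Norm (z - y.1) = 1)).card :=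
                  Finset.card_le_card (Finset.sdiff_subset)
              _ ≤ (cube y.1 1).card := Finset.card_le_card (Finset.filter_subset _ _)
              _ = 3^(N*d) := by rw [card_cube, hcard]
          exact mul_le_mul_of_nonneg_right (by exact_mod_cast hcle)
            (mul_nonneg hCmax (Real.rpow_nonneg (show (0:ℝ) ≤ (L:ℝ)+2 by linarith) _))
  -- vanishing of the boundary term in the interior
  have hbzero : ∀ y : Λ, supNorm (y.1 - 0) ≠ L → (M.mulVec φ) y = 0 := by
    intro y hy
    have hylt : supNorm (y.1 - 0) < L :=
      lt_of_le_of_ne ((mem_cube_iff _ _ _).mp y.2) hy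
    rw [hb y]
    have hempty : ((cube y.1 1).filter (fun z => l1Norm (z - y.1) = 1)) \ (Λ.filter (fun z => l1Norm (z - y.1) = 1)) = ∅ := by
      rw [Finset.sdiff_eq_empty_iff_subset]
      intro z hz
      rw [Finset.mem_filter] at hz ⊢
      refine ⟨?_, hz.2⟩
      rw [hΛ, mem_cube_iff, supNorm_le_iff]
      intro i
      have a1 := (supNorm_le_iff _ _).mp ((mem_cube_iff _ _ _).mp hz.1) i
      have a2 : ((y.1 - 0) i).natAbs < L :=
        lt_of_le_of_lt (natAbs_le_supNorm _ i) hylt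
      simp only [Pi.sub_apply, Pi.zero_apply] at a1 a2 ⊢
      omega
    rw [hempty, Finset.sum_empty, neg_zero]
  -- Green function bound on the boundary
  have hgreen : ∀ y : Λ, supNorm (y.1 - 0) = L →
      ‖M⁻¹ ⟨u, huΛ⟩ y‖ ≤ Real.exp (-(m*L)) := by
    intro y hy
    have h2 := hNS.2 u (by simpa [sub_zero] using hu2) y.1 hy
    rw [← hΛ] at h2
    have hgr : green W Λ (E:ℂ) u y.1 = M⁻¹ ⟨u, huΛ⟩ y := by
      rw [green, dif_pos huΛ, dif_pos y.2, ← hM]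
    rw [hgr] at h2
    refine h2.trans (Real.exp_le_exp.mpr (neg_le_neg ?_))
    rw [gammaExp, Nat.sub_self, zero_add, pow_one]
    have hnn : (0:ℝ) ≤ (L:ℝ) ^ (-(1:ℝ)/4) := Real.rpow_nonneg (Nat.cast_nonneg L) _
    nlinarith [mul_nonneg hm.le (Nat.cast_nonneg L : (0:ℝ) ≤ (L:ℝ))]
  -- assemble
  have habs : ‖Ψ u‖ ≤ (Λ.card : ℝ) * (Real.exp (-(m*(L:ℝ))) * K) := by
    rw [hrep]
    calc ‖∑ y : Λ, M⁻¹ ⟨u,huΛ⟩ y * (M.mulVec φ) y‖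
        ≤ ∑ y : Λ, ‖M⁻¹ ⟨u,huΛ⟩ y * (M.mulVec φ) y‖ :=
          norm_sum_le _ _
      _ ≤ ∑ _y : Λ, Real.exp (-(m*(L:ℝ))) * K := by
          refine Finset.sum_le_sum fun y _ => ?_
          rw [norm_mul]
          rcases eq_or_ne (supNorm (y.1 - 0)) L with hcase | hcase
          · exact mul_le_mul (hgreen y hcase) (hbabs y)
              (norm_nonneg _) (Real.exp_pos _).le
          · rw [hbzero y hcase, norm_zero, mul_zero]
            exact mul_nonneg (Real.exp_pos _).le hKnn
      _ = (Λ.card : ℝ) * (Real.exp (-(m*(L:ℝ))) * K) := by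
          rw [Finset.sum_const, nsmul_eq_mul]
          simp [Fintype.card_coe]
  refine habs.trans (le_of_eq ?_)
  have hcΛ : (Λ.card : ℝ) = ((2*L+1 : ℕ) : ℝ)^(N*d) := by
    rw [hΛ, card_cube, hcard]; push_cast; ring
  rw [hcΛ, hK]
  ring

/-- A nonzero polynomially bounded generalized eigenfunction forces all sufficiently
large cubes around the origin to be singular: if `HΨ = EΨ` with `Ψ(u) ≠ 0`, then the set
of `L` with `‖u‖ ≤ L^{1/α}` (`α = 3/2`) such that `C_L(0)` is `(E,m)`-non-singular is
finite. -/
theorem eventually_singular_at_origin (N d : ℕ) (hN : 1 ≤ N) (hd : 1 ≤ d)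
    (m : ℝ) (hm : 0 < m) (W : Conf N d → ℝ)
    (Ψ : Conf N d → ℂ) (E : ℝ) (A C₀ : ℝ)
    (hpoly : ∀ x : Conf N d, ‖Ψ x‖ ≤ C₀ * (1 + (supNorm x : ℝ)) ^ A)
    (hne : Ψ ≠ 0)
    (heig : ∀ x : Conf N d, hamApply W Ψ x = (E : ℂ) * Ψ x)
    (u : Conf N d) (hu : Ψ u ≠ 0) :
    {L : ℕ | (supNorm u : ℝ) ≤ (L : ℝ) ^ ((2 : ℝ) / 3) ∧
      NonSingular N W E m (0 : Conf N d) L}.Finite := by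
  classical
  have hΨu : 0 < ‖Ψ u‖ := by
    simpa [norm_pos_iff] using hu
  set F : ℕ → ℝ := fun L => ((2*L+1 : ℕ) : ℝ) ^ (N*d) * (3:ℝ)^(N*d) *
      (max C₀ 1) * ((L:ℝ)+2)^|A| * Real.exp (-(m*(L:ℝ))) with hF
  have hCmax : (0:ℝ) ≤ max C₀ 1 := le_trans zero_le_one (le_max_right _ _)
  -- the bound tends to zero
  have hFt : Filter.Tendsto F Filter.atTop (nhds 0) := by
    set C : ℝ := (3:ℝ)^(N*d) * (3:ℝ)^|A| * ((3:ℝ)^(N*d) * max C₀ 1) with hC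
    have hinf : Filter.Tendsto
        (fun x : ℝ => x ^ (((N*d : ℕ) : ℝ) + |A|) * Real.exp (-m * x))
        Filter.atTop (nhds 0) :=
      tendsto_rpow_mul_exp_neg_mul_atTop_nhds_zero _ m hm
    have hsq : Filter.Tendsto
        (fun L : ℕ => C * (((L:ℝ)) ^ (((N*d : ℕ) : ℝ) + |A|) * Real.exp (-m * (L:ℝ))))
        Filter.atTop (nhds 0) := by
      have := (hinf.comp tendsto_natCast_atTop_atTop).const_mul C
      simpa using this
    apply squeeze_zero' ?_ ?_ hsq
    · filter_upwards with L
      rw [hF]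
      have h1 : (0:ℝ) ≤ ((2*L+1 : ℕ) : ℝ) ^ (N*d) := by positivity
      have h2 : (0:ℝ) ≤ ((L:ℝ)+2)^|A| := Real.rpow_nonneg (by positivity) _
      have h3 : (0:ℝ) ≤ (3:ℝ)^(N*d) := by positivity
      exact mul_nonneg (mul_nonneg (mul_nonneg (mul_nonneg h1 h3) hCmax) h2)
        (Real.exp_pos _).le
    · filter_upwards [Filter.eventually_ge_atTop 1] with L hL
      have hL1 : (1:ℝ) ≤ (L:ℝ) := by exact_mod_cast hL
      have hLpos : (0:ℝ) < (L:ℝ) := by linarith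
      have hp1 : ((2*L+1 : ℕ) : ℝ) ^ (N*d) ≤ (3*(L:ℝ)) ^ (N*d) := by
        apply pow_le_pow_left₀ (by positivity)
        push_cast; linarith
      have hp2 : ((L:ℝ)+2)^|A| ≤ (3*(L:ℝ))^|A| :=
        Real.rpow_le_rpow (by linarith) (by linarith) (abs_nonneg A)
      calc F L = (((2*L+1 : ℕ) : ℝ) ^ (N*d) * ((L:ℝ)+2)^|A|) *
            ((3:ℝ)^(N*d) * max C₀ 1 * Real.exp (-(m*(L:ℝ)))) := by rw [hF]; ring
        _ ≤ ((3*(L:ℝ)) ^ (N*d) * (3*(L:ℝ))^|A|) *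
            ((3:ℝ)^(N*d) * max C₀ 1 * Real.exp (-(m*(L:ℝ)))) := by
            apply mul_le_mul_of_nonneg_right
              (mul_le_mul hp1 hp2 (Real.rpow_nonneg (by positivity) _) (by positivity))
            have : (0:ℝ) ≤ (3:ℝ)^(N*d) := by positivity
            exact mul_nonneg (mul_nonneg this hCmax) (Real.exp_pos _).le
        _ = C * (((L:ℝ)) ^ (((N*d : ℕ) : ℝ) + |A|) * Real.exp (-m * (L:ℝ))) := by
            rw [hC, mul_pow, Real.mul_rpow (by norm_num) hLpos.le,
              Real.rpow_add hLpos, Real.rpow_natCast, neg_mul]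
            ring
  have hev : ∀ᶠ L in Filter.atTop, F L < ‖Ψ u‖ :=
    hFt.eventually_lt_const hΨu
  obtain ⟨L₀, hL₀⟩ := Filter.eventually_atTop.mp hev
  apply Set.Finite.subset (Set.finite_Iio (max L₀ 1))
  intro L hLmem
  simp only [Set.mem_setOf_eq] at hLmem
  by_contra hnot
  rw [Set.mem_Iio, not_lt] at hnot
  have h1 : 1 ≤ L := le_trans (le_max_right _ _) hnot
  have h0 : L₀ ≤ L := le_trans (le_max_left _ _) hnot
  have hkey := key_bound N d m hm W Ψ E A C₀ hpoly heig u L h1 hLmem.1 hLmem.2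
  have hlt := hL₀ L h0
  rw [hF] at hlt
  exact absurd hkey (not_le.mpr hlt)

end MPLoc
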